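/- If a path-connected metric space X admits an L-Lipschitz mixer, then X has bounded turning: any two points a, b ∈ X are contained in a compact connected subset of X of diameter at most 2L·d(a,b). -/

import Mathlib

/-- If a path-connected metric space `X` admits an `L`-Lipschitz mixer
(Lipschitz with respect to the sum metric on `X³`), then any two points `a, b ∈ X` are
contained in a compact connected subset of `X` of diameter at most `2L·d(a,b)`. -/
theorem pathConnected_lipschitz_mixer_bounded_turning
    (X : Type*) [MetricSpace X] [PathConnectedSpace X]
    (L : ℝ) (hL : 0 ≤ L) (σ : X → X → X → X)
    (habs : ∀ a b : X, σ a a b = a ∧ σ a b a = a ∧ σ b a a = a)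
    (hlip : ∀ a b c a' b' c' : X,
      dist (σ a b c) (σ a' b' c') ≤ L * (dist a a' + dist b b' + dist c c')) :
    ∀ a b : X, ∃ E : Set X, a ∈ E ∧ b ∈ E ∧ IsCompact E ∧ IsConnected E ∧
      Metric.diam E ≤ 2 * L * dist a b := by
  intro a b
  obtain ⟨γ⟩ := PathConnectedSpace.joined a b
  set f : unitInterval → X := fun t => σ a (γ t) b with hf
  have hcont : Continuous f := by
    have hl : LipschitzWith ⟨L, hL⟩ (fun x => σ a x b) := by
      apply LipschitzWith.of_dist_le_mul
      intro x y
      have := hlip a x b a y b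
      exact (by simpa using this : dist (σ a x b) (σ a y b) ≤ L * dist x y)
    exact (hl.continuous).comp γ.continuous
  have hclose : ∀ t : unitInterval, dist (f t) a ≤ L * dist a b := by
    intro t
    have h1 : σ a (γ t) a = a := (habs a (γ t)).2.1
    calc dist (f t) a = dist (σ a (γ t) b) (σ a (γ t) a) := by rw [h1]
    _ ≤ L * (dist a a + dist (γ t) (γ t) + dist b a) := hlip _ _ _ _ _ _
    _ = L * dist a b := by simp [dist_comm]
  refine ⟨Set.range f, ⟨0, ?_⟩, ⟨1, ?_⟩, isCompact_range hcont,
    isConnected_range hcont, ?_⟩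
  · simp [hf, γ.source, (habs a b).1]
  · simp [hf, γ.target, (habs b a).2.2]
  · apply Metric.diam_le_of_forall_dist_le (by positivity)
    rintro x ⟨t, rfl⟩ y ⟨s, rfl⟩
    calc dist (f t) (f s) ≤ dist (f t) a + dist a (f s) := dist_triangle _ _ _
    _ ≤ L * dist a b + L * dist a b := by
        exact add_le_add (hclose t) (by rw [dist_comm]; exact hclose s)
    _ = 2 * L * dist a b := by ring
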